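/- Let a, b ∈ ℂ \ {0} and let c ∈ ℂ satisfy c² = 4ab. Then the image of the symbol, {a e^{iξ} + b e^{-iξ} : ξ ∈ ℝ}, equals the set {z ∈ ℂ : |z − c| + |z + c| = 2(|a| + |b|)}; i.e. it is the ellipse with focal points ±c, major semi-axis of length |a| + |b| (pointing in the direction e^{i(α+β)/2} where a = |a| e^{iα}, b = |b| e^{iβ}), and minor semi-axis of length ||a| − |b||. -/

import Mathlib

noncomputable section

open Complex

set_option maxHeartbeats 1000000

/-- Auxiliary: points on a (possibly degenerate) ellipse admit a trig parametrization. -/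
lemma ellipse_param (A B x y : ℝ) (hA : 0 < A) (hx : |x| ≤ A)
    (h : A^2 * B^2 = B^2 * x^2 + A^2 * y^2) :
    ∃ t : ℝ, A * Real.cos t = x ∧ B * Real.sin t = y := by
  by_cases hB : B = 0
  · subst hB
    have h2 : y^2 = 0 := by nlinarith [sq_nonneg y, mul_pos hA hA]
    have hy : y = 0 := by
      exact pow_eq_zero_iff two_ne_zero |>.mp h2
    refine ⟨Real.arccos (x / A), ?_, by simp [hy]⟩
    rw [Real.cos_arccos (by rw [le_div_iff₀ hA]; nlinarith [abs_le.1 hx])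
        (by rw [div_le_one hA]; exact (abs_le.1 hx).2)]
    field_simp
  · set v : ℂ := ⟨x / A, y / B⟩ with hv
    have hvabs : ‖v‖ = 1 := by
      have h1 : (x / A)^2 + (y / B)^2 = 1 := by
        field_simp
        nlinarith
      rw [Complex.norm_def, Complex.normSq_apply, hv]
      simp only
      rw [show x / A * (x / A) + y / B * (y / B) = (x/A)^2 + (y/B)^2 by ring, h1,
        Real.sqrt_one]
    have hv0 : v ≠ 0 := by
      intro h0
      rw [h0] at hvabs; simp at hvabs
    refine ⟨v.arg, ?_, ?_⟩
    · rw [Complex.cos_arg hv0, hvabs]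
      simp [hv]
      field_simp
    · rw [Complex.sin_arg, hvabs]
      simp [hv]
      field_simp

theorem range_symbol_eq_ellipse (a b : ℂ) (ha : a ≠ 0) (hb : b ≠ 0)
    (c : ℂ) (hc : c ^ 2 = 4 * a * b) :
    Set.range (fun ξ : ℝ => a * Complex.exp (ξ * Complex.I)
        + b * Complex.exp (-(ξ * Complex.I)))
      = {z : ℂ | ‖z - c‖ + ‖z + c‖
          = 2 * (‖a‖ + ‖b‖)} := by
  set p := ‖a‖ with hp
  set q := ‖b‖ with hq
  have hp0 : 0 < p := by simpa [hp] using ha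
  have hq0 : 0 < q := by simpa [hq] using hb
  have habsc2 : (‖c‖)^2 = 4 * (p * q) := by
    rw [← norm_pow, hc, norm_mul, norm_mul]
    simp [hp, hq]
    ring
  ext z
  constructor
  · rintro ⟨ξ, rfl⟩
    show ‖a * Complex.exp (ξ * Complex.I) + b * Complex.exp (-(ξ * Complex.I)) - c‖
        + ‖a * Complex.exp (ξ * Complex.I) + b * Complex.exp (-(ξ * Complex.I)) + c‖
        = 2 * (p + q)
    set u := a * Complex.exp (ξ * Complex.I) with hu
    set v := b * Complex.exp (-(ξ * Complex.I)) with hvv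
    have huv : u * v = a * b := by
      rw [hu, hvv, mul_mul_mul_comm, ← Complex.exp_add]
      simp
    have habsu : ‖u‖ = p := by
      rw [hu, norm_mul,
        show ((ξ:ℂ) * Complex.I) = ((ξ:ℝ):ℂ) * Complex.I from rfl,
        Complex.norm_exp_ofReal_mul_I, mul_one, hp]
    have habsv : ‖v‖ = q := by
      rw [hvv, norm_mul,
        show -((ξ:ℂ) * Complex.I) = ((-ξ:ℝ):ℂ) * Complex.I by push_cast; ring,
        Complex.norm_exp_ofReal_mul_I, mul_one, hq]
    have hzz : (u + v - c) * (u + v + c) = (u - v)^2 := by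
      linear_combination (-1 : ℂ) * hc + 4 * huv
    have hprod : ‖u + v - c‖ * ‖u + v + c‖
        = ‖u - v‖ ^ 2 := by
      rw [← norm_mul, hzz, norm_pow]
    have hsum : ‖u + v - c‖^2 + ‖u + v + c‖^2
        = 2 * ‖u + v‖ ^2 + 2 * ‖c‖ ^2 := by
      simp only [Complex.sq_norm, Complex.normSq_apply, Complex.sub_re, Complex.sub_im,
        Complex.add_re, Complex.add_im]
      ring
    have hpar : ‖u + v‖ ^ 2 + ‖u - v‖ ^ 2 = 2 * p^2 + 2 * q^2 := by
      rw [← habsu, ← habsv]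
      simp only [Complex.sq_norm, Complex.normSq_apply, Complex.sub_re, Complex.sub_im,
        Complex.add_re, Complex.add_im]
      ring
    have hsq : (‖u + v - c‖ + ‖u + v + c‖)^2 = (2 * (p + q))^2 := by
      have expand : (‖u + v - c‖ + ‖u + v + c‖)^2
          = ‖u + v - c‖^2 + ‖u + v + c‖^2
            + 2 * (‖u + v - c‖ * ‖u + v + c‖) := by ring
      rw [expand, hsum, hprod]
      nlinarith [hpar, habsc2]
    have h1 : (0:ℝ) ≤ ‖u + v - c‖ + ‖u + v + c‖ := by positivity
    have h2 : (0:ℝ) ≤ 2 * (p + q) := by positivity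
    nlinarith [hsq, h1, h2]
  · intro hz
    simp only [Set.mem_setOf_eq] at hz
    set F : ℝ := 2 * Real.sqrt (p * q) with hF
    have hF0 : 0 < F := by rw [hF]; positivity
    have hF2 : F^2 = 4 * (p * q) := by
      rw [hF, mul_pow, Real.sq_sqrt (by positivity)]; ring
    have habsc : ‖c‖ = F := by
      nlinarith [habsc2, norm_nonneg c, hF0]
    have hFc0 : ((F:ℝ):ℂ) ≠ 0 := by exact_mod_cast hF0.ne'
    set r : ℂ := c / F with hr
    have hrabs : ‖r‖ = 1 := by
      rw [hr, norm_div, habsc, Complex.norm_real, Real.norm_eq_abs, abs_of_pos hF0]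
      field_simp
    have hr0 : r ≠ 0 := by
      intro h0; rw [h0] at hrabs; simp at hrabs
    have hcrF : c = r * F := by
      rw [hr, div_mul_cancel₀ _ hFc0]
    have e1 : r^2 * ((F:ℂ))^2 = 4 * a * b := by rw [← hc, hcrF]; ring
    have e2 : ((F:ℂ))^2 = 4 * ((p:ℂ) * (q:ℂ)) := by
      rw [← Complex.ofReal_pow, hF2]; push_cast; ring
    have hr2 : r^2 * ((p:ℂ) * (q:ℂ)) = a * b := by
      rw [e2] at e1
      linear_combination e1 / 4
    set w : ℂ := z / r with hw
    have hzw : z = r * w := by rw [hw]; field_simp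
    set x := w.re with hx
    set y := w.im with hy
    set A := p + q with hA
    set B := p - q with hB
    have hA0 : 0 < A := by rw [hA]; positivity
    have hFAB : F^2 = A^2 - B^2 := by rw [hA, hB]; nlinarith [hF2]
    have hdist1 : ‖z - c‖ = ‖w - F‖ := by
      rw [hzw, hcrF, show r * w - r * F = r * (w - F) by ring, norm_mul, hrabs, one_mul]
    have hdist2 : ‖z + c‖ = ‖w + F‖ := by
      rw [hzw, hcrF, show r * w + r * F = r * (w + F) by ring, norm_mul, hrabs, one_mul]
    rw [hdist1, hdist2] at hz
    set P := ‖w - F‖ with hP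
    set Q := ‖w + F‖ with hQ
    have hP2 : P^2 = (x - F)^2 + y^2 := by
      rw [hP, Complex.sq_norm, Complex.normSq_apply]
      simp only [Complex.sub_re, Complex.sub_im, Complex.ofReal_re, Complex.ofReal_im]
      rw [← hx, ← hy]; ring
    have hQ2 : Q^2 = (x + F)^2 + y^2 := by
      rw [hQ, Complex.sq_norm, Complex.normSq_apply]
      simp only [Complex.add_re, Complex.add_im, Complex.ofReal_re, Complex.ofReal_im]
      rw [← hx, ← hy]; ring
    have hxA : |x| ≤ A := by
      have h1 : |(w - F).re| ≤ P := Complex.abs_re_le_norm _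
      have h2 : |(w + F).re| ≤ Q := Complex.abs_re_le_norm _
      have e1 : (w - (F:ℂ)).re = x - F := by
        simp only [Complex.sub_re, Complex.ofReal_re]
        rfl
      have e2 : (w + (F:ℂ)).re = x + F := by
        simp only [Complex.add_re, Complex.ofReal_re]
        rfl
      rw [e1] at h1; rw [e2] at h2
      rw [abs_le] at h1 h2 ⊢
      constructor <;> nlinarith [h1.1, h1.2, h2.1, h2.2, hz]
    have hQP : (Q - P) * (2 * A) = 4 * x * F := by
      have h1 : Q^2 - P^2 = 4 * x * F := by linear_combination hQ2 - hP2
      linear_combination h1 - (Q - P) * hz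
    have hAQ : A * Q = A^2 + x * F := by linear_combination hQP / 4 + (A / 2) * hz
    have key : A^2 * B^2 = B^2 * x^2 + A^2 * y^2 := by
      have hQQ : A^2 * Q^2 = (A^2 + x * F)^2 := by rw [← hAQ]; ring
      nlinarith [hQQ, hQ2, hFAB]
    obtain ⟨t, hcos, hsin⟩ := ellipse_param A B x y hA0 hxA key
    set E : ℂ := (p : ℂ) * r * Complex.exp (t * Complex.I) / a with hE
    have hp0' : ((p:ℝ):ℂ) ≠ 0 := by exact_mod_cast hp0.ne'
    have hexp0 : Complex.exp ((t:ℂ) * Complex.I) ≠ 0 := Complex.exp_ne_zero _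
    have hEabs : ‖E‖ = 1 := by
      rw [hE, norm_div, norm_mul, norm_mul,
        show ((t:ℂ) * Complex.I) = ((t:ℝ):ℂ) * Complex.I from rfl,
        Complex.norm_exp_ofReal_mul_I, hrabs, Complex.norm_real, Real.norm_eq_abs, abs_of_pos hp0, ← hp]
      field_simp
    have hEexp : Complex.exp ((E.arg : ℂ) * Complex.I) = E := by
      have h := Complex.norm_mul_exp_arg_mul_I E
      rw [hEabs] at h
      simpa using h
    have hwval : (p:ℂ) * Complex.exp (t * Complex.I) + (q:ℂ) * Complex.exp (-(t * Complex.I)) = w := by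
      apply Complex.ext
      · rw [show -((t:ℂ) * Complex.I) = ((-t : ℝ):ℂ) * Complex.I by push_cast; ring]
        simp only [Complex.add_re, Complex.mul_re, Complex.ofReal_re, Complex.ofReal_im,
          Complex.exp_ofReal_mul_I_re, Complex.exp_ofReal_mul_I_im, zero_mul, sub_zero]
        rw [Real.cos_neg, ← hx]
        rw [hA] at hcos
        linarith [hcos]
      · rw [show -((t:ℂ) * Complex.I) = ((-t : ℝ):ℂ) * Complex.I by push_cast; ring]
        simp only [Complex.add_im, Complex.mul_im, Complex.ofReal_re, Complex.ofReal_im,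
          Complex.exp_ofReal_mul_I_re, Complex.exp_ofReal_mul_I_im, zero_mul, add_zero]
        rw [Real.sin_neg, ← hy]
        rw [hB] at hsin
        linarith [hsin]
    have hbval : b = r^2 * ((p:ℂ) * (q:ℂ)) / a := by
      field_simp
      linear_combination -hr2
    refine ⟨E.arg, ?_⟩
    show a * Complex.exp ((E.arg : ℂ) * Complex.I)
        + b * Complex.exp (-((E.arg : ℂ) * Complex.I)) = z
    rw [Complex.exp_neg, hEexp]
    have hmain : a * E + b * E⁻¹
        = r * ((p:ℂ) * Complex.exp (t * Complex.I) + (q:ℂ) * Complex.exp (-(t * Complex.I))) := by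
      rw [hE, hbval, Complex.exp_neg]
      field_simp
    rw [hmain, hwval, ← hzw]
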